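/- Let F be a field of characteristic p and a₁, …, aₙ ∈ F. The extension F(℘⁻¹a₁, …, ℘⁻¹aₙ)/F has Galois group (C_p)^n if and only if the classes of a₁, …, aₙ in the additive group F/℘(F) are linearly independent over 𝔽_p, where ℘(x) = x^p − x. -/

import Mathlib

open Polynomial IntermediateField

/-- In a field of characteristic `p`, any solution of `x ^ p = x` lies in the prime field. -/
lemma aux_root {p : ℕ} (hp : p.Prime) {L : Type*} [Field L] [CharP L p]
    {x : L} (hx : x ^ p = x) : ∃ k : ZMod p, ZMod.castHom (dvd_refl p) L k = x := by
  classical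
  haveI := Fact.mk hp
  set χ : ZMod p →+* L := ZMod.castHom (dvd_refl p) L with hχdef
  have hχ : Function.Injective χ := χ.injective
  set g : L[X] := X ^ p - X with hg
  have hdeg : g.degree = p := by
    rw [hg]
    rw [degree_sub_eq_left_of_degree_lt]
    · exact degree_X_pow p
    · rw [degree_X_pow, degree_X]
      exact_mod_cast hp.one_lt
  have hg0 : g ≠ 0 := by
    intro h
    rw [h, degree_zero] at hdeg
    exact absurd hdeg (by simp)
  have hcard : g.roots.card ≤ p := by
    have := card_roots hg0
    rw [hdeg] at this
    exact_mod_cast this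
  set s : Finset L := Finset.univ.image χ with hs
  have hscard : s.card = p := by
    rw [hs, Finset.card_image_of_injective _ hχ, Finset.card_univ, ZMod.card]
  have hsub : s ⊆ g.roots.toFinset := by
    intro y hy
    rw [hs, Finset.mem_image] at hy
    obtain ⟨k, -, rfl⟩ := hy
    rw [Multiset.mem_toFinset, mem_roots hg0]
    simp only [hg, IsRoot, eval_sub, eval_pow, eval_X]
    rw [← map_pow, ZMod.pow_card, sub_self]
  have heq : s = g.roots.toFinset := by
    apply Finset.eq_of_subset_of_card_le hsub
    calc g.roots.toFinset.card ≤ g.roots.card := g.roots.toFinset_card_le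
      _ ≤ p := hcard
      _ = s.card := hscard.symm
  have hxroot : x ∈ g.roots.toFinset := by
    rw [Multiset.mem_toFinset, mem_roots hg0]
    simp [hg, IsRoot, hx]
  rw [← heq, hs, Finset.mem_image] at hxroot
  obtain ⟨k, -, hk⟩ := hxroot
  exact ⟨k, hk⟩

lemma aux_intCast_pow {p : ℕ} (hp : p.Prime) {L : Type*} [Field L] [CharP L p]
    (m : ℤ) : ((m : L)) ^ p = (m : L) := by
  haveI := Fact.mk hp
  have h1 : (ZMod.castHom (dvd_refl p) L) ((m : ZMod p)) = (m : L) := map_intCast _ m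
  rw [← h1, ← map_pow, ZMod.pow_card]

lemma aux_sum_pow {p : ℕ} (hp : p.Prime) {L : Type*} [Field L] [CharP L p]
    {n : ℕ} (m : Fin n → ℤ) (x : Fin n → L) :
    (∑ i, m i • x i) ^ p = ∑ i, m i • (x i ^ p) := by
  haveI := Fact.mk hp
  haveI : ExpChar L p := ExpChar.prime hp
  rw [sum_pow_char]
  congr 1
  funext i
  rw [zsmul_eq_mul, zsmul_eq_mul, mul_pow, aux_intCast_pow hp]

lemma aux_galois {p n : ℕ} (hp : p.Prime) (F K : Type*) [Field F] [Field K] [CharP F p]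
    [Algebra F K] [IsAlgClosed K]
    (a : Fin n → F) (r : Fin n → K)
    (hr : ∀ i, r i ^ p - r i = algebraMap F K (a i)) :
    IsGalois F (adjoin F (Set.range r)) := by
  classical
  haveI := Fact.mk hp
  haveI : CharP K p := charP_of_injective_algebraMap (algebraMap F K).injective p
  haveI : ExpChar K p := ExpChar.prime hp
  set A : Finset F := Finset.univ.image a with hA
  set P : F[X] := ∏ b ∈ A, (X ^ p - (X + C b)) with hP
  have honelt : (1 : WithBot ℕ) < p := by exact_mod_cast hp.one_lt
  have hfm : ∀ b : F, (X ^ p - (X + C b)).Monic := by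
    intro b
    apply (monic_X_pow p).sub_of_left
    rw [degree_X_pow, degree_X_add_C]
    exact honelt
  have hPm : P.Monic := monic_prod_of_monic _ _ fun b _ => hfm b
  have hP0 : P ≠ 0 := hPm.ne_zero
  have hfs : ∀ b : F, (X ^ p - (X + C b)).Separable := by
    intro b
    have hder : derivative (X ^ p - (X + C b)) = -1 := by
      simp [derivative_X_pow, CharP.cast_eq_zero F p]
    rw [Polynomial.separable_def, hder]
    exact (isCoprime_one_right).neg_right
  have hPs : P.Separable := by
    apply Polynomial.separable_prod'
    · intro b _ b' _ hne
      refine ⟨C (b' - b)⁻¹, -(C (b' - b)⁻¹), ?_⟩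
      have h1 : (b' - b) ≠ 0 := sub_ne_zero.mpr (fun h => hne h.symm)
      calc C (b' - b)⁻¹ * (X ^ p - (X + C b)) + -C (b' - b)⁻¹ * (X ^ p - (X + C b'))
          = C (b' - b)⁻¹ * (C b' - C b) := by ring
        _ = 1 := by rw [← C_sub, ← C_mul, inv_mul_cancel₀ h1, C_1]
    · intro b _; exact hfs b
  have hsplits : (P.map (algebraMap F K)).Splits := IsAlgClosed.splits _
  have hroots : adjoin F (P.rootSet K) = adjoin F (Set.range r) := by
    apply le_antisymm
    · rw [adjoin_le_iff]
      intro x hx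
      rw [mem_rootSet] at hx
      obtain ⟨-, hx⟩ := hx
      rw [hP, map_prod] at hx
      obtain ⟨b, hbA, hb⟩ := Finset.prod_eq_zero_iff.mp hx
      rw [hA, Finset.mem_image] at hbA
      obtain ⟨i, -, rfl⟩ := hbA
      have hxr : x ^ p - (x + algebraMap F K (a i)) = 0 := by
        simpa using hb
      have hy : (x - r i) ^ p = x - r i := by
        rw [sub_pow_char]
        have h1 : x ^ p = x + algebraMap F K (a i) := by linear_combination hxr
        have h2 : (r i) ^ p = r i + algebraMap F K (a i) := by linear_combination hr i
        rw [h1, h2]; ring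
      obtain ⟨k, hk⟩ := aux_root hp hy
      have hxeq : x = r i + ZMod.castHom (dvd_refl p) K k := by
        rw [hk]; ring
      rw [hxeq]
      apply add_mem
      · exact subset_adjoin F _ ⟨i, rfl⟩
      · have h3 : ZMod.castHom (dvd_refl p) K k
            = algebraMap F K (ZMod.castHom (dvd_refl p) F k) := by
          have := RingHom.ext_zmod (ZMod.castHom (dvd_refl p) K)
            ((algebraMap F K).comp (ZMod.castHom (dvd_refl p) F))
          exact RingHom.congr_fun this k
        rw [h3]
        exact IntermediateField.algebraMap_mem _ _
    · rw [adjoin_le_iff]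
      rintro x ⟨i, rfl⟩
      apply subset_adjoin
      rw [mem_rootSet]
      refine ⟨hP0, ?_⟩
      rw [hP, map_prod]
      apply Finset.prod_eq_zero (Finset.mem_image_of_mem a (Finset.mem_univ i))
      simp only [map_sub, map_add, map_pow, aeval_X, aeval_C]
      linear_combination hr i
  haveI : IsSplittingField F (adjoin F (Set.range r)) P := by
    rw [← hroots]
    exact adjoin_rootSet_isSplittingField hsplits
  exact IsGalois.of_separable_splitting_field hPs

set_option maxHeartbeats 1000000 in
set_option synthInstance.maxHeartbeats 400000 in
/-- Artin–Schreier theory: over a field `F` of characteristic `p`, the extension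
`F(℘⁻¹a₁, …, ℘⁻¹aₙ)/F` has Galois group `(C_p)ⁿ` iff the classes of `a₁, …, aₙ` in the
additive group `F/℘(F)` are linearly independent over `𝔽_p`, where `℘(x) = x^p - x`. -/
theorem stmt_11 (p n : ℕ) (hp : p.Prime) (F : Type*) [Field F] [CharP F p]
    (a : Fin n → F) (r : Fin n → AlgebraicClosure F)
    (hr : ∀ i, r i ^ p - r i = algebraMap F (AlgebraicClosure F) (a i)) :
    (IsGalois F (adjoin F (Set.range r)) ∧
        Nonempty ((↥(adjoin F (Set.range r)) ≃ₐ[F] ↥(adjoin F (Set.range r)))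
          ≃* (Fin n → Multiplicative (ZMod p))))
      ↔ ∀ ν : Fin n → ℤ, (∃ b : F, ∑ i, ν i • a i = b ^ p - b) → ∀ i, (p : ℤ) ∣ ν i := by
  classical
  haveI := Fact.mk hp
  haveI : NeZero p := ⟨hp.ne_zero⟩
  set E := adjoin F (Set.range r) with hE
  haveI : FiniteDimensional F E := by
    haveI : Finite (Set.range r) := Set.finite_range r
    apply IntermediateField.finiteDimensional_adjoin
    rintro x ⟨i, rfl⟩
    refine ⟨X ^ p - (X + C (a i)), ?_, ?_⟩
    · apply (monic_X_pow p).sub_of_left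
      rw [degree_X_pow, degree_X_add_C]
      exact_mod_cast hp.one_lt
    · simp only [eval₂_sub, eval₂_add, eval₂_pow, eval₂_X, eval₂_C]
      linear_combination hr i
  haveI hGal : IsGalois F E := aux_galois hp F _ a r hr
  haveI : CharP E p := charP_of_injective_algebraMap (algebraMap F E).injective p
  haveI : ExpChar E p := ExpChar.prime hp
  set χ : ZMod p →+* E := ZMod.castHom (dvd_refl p) E with hχdef
  have hχinj : Function.Injective χ := χ.injective
  set rE : Fin n → E := fun i => ⟨r i, subset_adjoin F _ ⟨i, rfl⟩⟩ with hrEdef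
  have hrE : ∀ i, rE i ^ p = rE i + algebraMap F E (a i) := by
    intro i
    apply Subtype.val_injective
    show ((rE i ^ p : E) : AlgebraicClosure F) = ((rE i + algebraMap F E (a i) : E) : _)
    rw [SubmonoidClass.coe_pow, AddMemClass.coe_add, IntermediateField.coe_algebraMap_apply]
    linear_combination hr i
  have hfixχ : ∀ (σ : E ≃ₐ[F] E) (k : ZMod p), σ (χ k) = χ k := by
    intro σ k
    have h := RingHom.ext_zmod ((σ : E →+* E).comp χ) χ
    exact RingHom.congr_fun h k
  have hd : ∀ (σ : E ≃ₐ[F] E) (i : Fin n), (σ (rE i) - rE i) ^ p = σ (rE i) - rE i := by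
    intro σ i
    have h1 : σ (rE i) ^ p = σ (rE i) + algebraMap F E (a i) := by
      rw [← map_pow, hrE i, map_add, AlgEquiv.commutes]
    rw [sub_pow_char, h1, hrE i]; ring
  set cc : (E ≃ₐ[F] E) → Fin n → ZMod p :=
    fun σ i => Classical.choose (aux_root hp (hd σ i)) with hccdef
  have hcc : ∀ σ i, χ (cc σ i) = σ (rE i) - rE i :=
    fun σ i => Classical.choose_spec (aux_root hp (hd σ i))
  have hadd : ∀ σ τ i, cc (σ * τ) i = cc σ i + cc τ i := by
    intro σ τ i
    apply hχinj
    have hτ : τ (rE i) = rE i + χ (cc τ i) := by rw [hcc]; ring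
    rw [map_add, hcc, hcc, hcc, AlgEquiv.mul_apply, hτ, map_add, hfixχ σ]
    ring
  have hone : ∀ i, cc 1 i = 0 := by
    intro i
    apply hχinj
    rw [hcc, map_zero]
    simp
  have hker : ∀ σ : E ≃ₐ[F] E, (∀ i, cc σ i = 0) → σ = 1 := by
    intro σ h0
    have hfix : ∀ i, σ (rE i) = rE i := by
      intro i
      have h1 := hcc σ i
      rw [h0 i, map_zero] at h1
      exact sub_eq_zero.mp h1.symm
    have halg : σ.toAlgHom = (1 : E ≃ₐ[F] E).toAlgHom := by
      apply IntermediateField.adjoin_algHom_ext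
      rintro x ⟨i, rfl⟩
      exact hfix i
    exact AlgEquiv.ext fun x => AlgHom.congr_fun halg x
  have hinj : Function.Injective cc := by
    intro σ τ h
    have h3 : ∀ i, cc τ⁻¹ i = - cc τ i := by
      intro i
      have h4 := hadd τ⁻¹ τ i
      rw [inv_mul_cancel, hone] at h4
      exact eq_neg_of_add_eq_zero_left h4.symm
    have h1 : ∀ i, cc (τ⁻¹ * σ) i = 0 := by
      intro i
      rw [hadd, h3, ← congr_fun h i]
      ring
    have := hker _ h1
    exact (inv_mul_eq_one.mp this).symm
  have hfixed : ∀ x : E, (∀ σ : E ≃ₐ[F] E, σ x = x) → ∃ b : F, algebraMap F E b = x := by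
    intro x hx
    have h1 : IntermediateField.fixingSubgroup (⊥ : IntermediateField F E) = ⊤ := by
      rw [eq_top_iff]
      intro σ _
      rw [IntermediateField.mem_fixingSubgroup_iff]
      intro y hy
      obtain ⟨b, rfl⟩ := IntermediateField.mem_bot.mp hy
      exact σ.commutes b
    have h2 := IsGalois.fixedField_fixingSubgroup (⊥ : IntermediateField F E)
    rw [h1] at h2
    have h3 : x ∈ IntermediateField.fixedField (⊤ : Subgroup (E ≃ₐ[F] E)) :=
      fun g => hx g
    rw [h2] at h3
    exact IntermediateField.mem_bot.mp h3
  have hscomp : ∀ (ν : Fin n → ℤ) (σ : E ≃ₐ[F] E),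
      σ (∑ i, ν i • rE i) - (∑ i, ν i • rE i) = χ (∑ i, (ν i : ZMod p) * cc σ i) := by
    intro ν σ
    rw [map_sum, map_sum, ← Finset.sum_sub_distrib]
    refine Finset.sum_congr rfl fun i _ => ?_
    rw [map_zsmul, ← smul_sub, ← hcc, ← map_zsmul, zsmul_eq_mul]
  have hpsum : ∀ ν : Fin n → ℤ,
      (∑ i, ν i • rE i) ^ p - (∑ i, ν i • rE i) = algebraMap F E (∑ i, ν i • a i) := by
    intro ν
    rw [aux_sum_pow hp]
    simp_rw [hrE, smul_add, Finset.sum_add_distrib]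
    rw [add_sub_cancel_left, map_sum]
    exact Finset.sum_congr rfl fun i _ => (map_zsmul (algebraMap F E) _ _).symm
  constructor
  · rintro ⟨-, ⟨e⟩⟩ ν ⟨b, hb⟩
    haveI : Fintype (E ≃ₐ[F] E) := AlgEquiv.fintype F E
    have hcard : Fintype.card (E ≃ₐ[F] E) = Fintype.card (Fin n → ZMod p) := by
      rw [Fintype.card_congr e.toEquiv]
      simp [Fintype.card_multiplicative]
    have hsurj : Function.Surjective cc :=
      ((Fintype.bijective_iff_injective_and_card cc).mpr ⟨hinj, hcard⟩).2
    set s : E := ∑ i, ν i • rE i with hsdef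
    have hsb : s ^ p - s = algebraMap F E (b ^ p - b) := by
      rw [hpsum ν, hb]
    have h4 : (s - algebraMap F E b) ^ p = s - algebraMap F E b := by
      rw [sub_pow_char, ← map_pow]
      linear_combination hsb + (map_sub (algebraMap F E) (b ^ p) b)
    obtain ⟨k0, hk0⟩ := aux_root hp h4
    have hsfix : ∀ σ : E ≃ₐ[F] E, σ s = s := by
      intro σ
      have hseq : s = algebraMap F E b + χ k0 := by rw [hk0]; ring
      rw [hseq, map_add, AlgEquiv.commutes, hfixχ]
    have hzero : ∀ σ, (∑ i, (ν i : ZMod p) * cc σ i) = 0 := by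
      intro σ
      apply hχinj
      rw [map_zero, ← hscomp ν σ, hsfix, sub_self]
    intro j
    obtain ⟨σ, hσ⟩ := hsurj (fun i => if i = j then 1 else 0)
    have h5 := hzero σ
    rw [hσ] at h5
    simp only [mul_ite, mul_one, mul_zero, Finset.sum_ite_eq', Finset.mem_univ,
      if_true] at h5
    exact (ZMod.intCast_zmod_eq_zero_iff_dvd _ p).mp h5
  · intro hind
    refine ⟨hGal, ?_⟩
    have hsurj : Function.Surjective cc := by
      set W : AddSubgroup (Fin n → ZMod p) :=
        { carrier := Set.range cc
          zero_mem' := ⟨1, funext hone⟩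
          add_mem' := by
            rintro x y ⟨σ, rfl⟩ ⟨τ, rfl⟩
            exact ⟨σ * τ, funext fun i => hadd σ τ i⟩
          neg_mem' := by
            rintro x ⟨σ, rfl⟩
            refine ⟨σ⁻¹, funext fun i => ?_⟩
            have h4 := hadd σ⁻¹ σ i
            rw [inv_mul_cancel, hone] at h4
            exact eq_neg_of_add_eq_zero_left h4.symm } with hW
      by_contra hns
      set V : Submodule (ZMod p) (Fin n → ZMod p) := AddSubgroup.toZModSubmodule p W with hV
      have hVmem : ∀ x, x ∈ V ↔ ∃ σ, cc σ = x := fun x => Iff.rfl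
      have hVne : V ≠ ⊤ := by
        intro hVt
        apply hns
        intro t
        exact (hVmem t).mp (hVt ▸ Submodule.mem_top)
      obtain ⟨f, hf0, hfbot⟩ :=
        Submodule.exists_dual_map_eq_bot_of_lt_top (lt_top_iff_ne_top.mpr hVne) inferInstance
      have hfV : ∀ x ∈ V, f x = 0 := by
        intro x hx
        have h1 : f x ∈ V.map f := Submodule.mem_map_of_mem hx
        rw [hfbot] at h1
        exact Submodule.mem_bot _ |>.mp h1
      set νZ : Fin n → ℤ := fun i => ((f (Pi.single i 1)).val : ℤ) with hνZ
      have hνcast : ∀ i, ((νZ i : ZMod p)) = f (Pi.single i 1) := by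
        intro i
        rw [hνZ]
        push_cast
        rw [ZMod.natCast_val, ZMod.cast_id]
      have hfx : ∀ x : Fin n → ZMod p, f x = ∑ i, x i * (νZ i : ZMod p) := by
        intro x
        rw [LinearMap.pi_apply_eq_sum_univ f x]
        refine Finset.sum_congr rfl fun i _ => ?_
        rw [hνcast, smul_eq_mul]
        have hsingle : (fun j => if i = j then (1 : ZMod p) else 0) = Pi.single i 1 := by
          funext j
          simp [Pi.single_apply, eq_comm]
        rw [hsingle]
      have hfixall : ∀ σ : E ≃ₐ[F] E, σ (∑ i, νZ i • rE i) = ∑ i, νZ i • rE i := by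
        intro σ
        have h1 := hscomp νZ σ
        have h2 : (∑ i, (νZ i : ZMod p) * cc σ i) = f (cc σ) := by
          rw [hfx (cc σ)]
          exact Finset.sum_congr rfl fun i _ => mul_comm _ _
        have h3 : f (cc σ) = 0 := hfV _ ((hVmem _).mpr ⟨σ, rfl⟩)
        rw [h2, h3, map_zero] at h1
        exact sub_eq_zero.mp h1
      obtain ⟨b, hbeq⟩ := hfixed _ hfixall
      have hfin : ∑ i, νZ i • a i = b ^ p - b := by
        have h1 := hpsum νZ
        rw [← hbeq, ← map_pow, ← map_sub] at h1
        exact ((algebraMap F E).injective h1).symm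
      have hdvd := hind νZ ⟨b, hfin⟩
      apply hf0
      have hν0 : ∀ i, f (Pi.single i 1) = 0 := by
        intro i
        have h1 : ((p:ℕ):ℤ) ∣ (((f (Pi.single i 1)).val : ℕ) : ℤ) := hdvd i
        have h2 : p ∣ (f (Pi.single i 1)).val := Int.natCast_dvd_natCast.mp h1
        have h3 : (f (Pi.single i 1)).val = 0 :=
          Nat.eq_zero_of_dvd_of_lt h2 (ZMod.val_lt _)
        exact (ZMod.val_eq_zero _).mp h3
      refine LinearMap.ext fun x => ?_
      rw [hfx x]
      simp only [LinearMap.zero_apply]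
      refine Finset.sum_eq_zero fun i _ => ?_
      rw [hνcast, hν0, mul_zero]
    let CM : (E ≃ₐ[F] E) →* (Fin n → Multiplicative (ZMod p)) :=
      { toFun := fun σ i => Multiplicative.ofAdd (cc σ i)
        map_one' := funext fun i => by
          show Multiplicative.ofAdd (cc 1 i) = 1
          rw [hone i]
          rfl
        map_mul' := fun σ τ => funext fun i => by
          show Multiplicative.ofAdd (cc (σ * τ) i)
            = Multiplicative.ofAdd (cc σ i) * Multiplicative.ofAdd (cc τ i)
          rw [hadd]
          rfl }
    refine ⟨MulEquiv.ofBijective CM ⟨?_, ?_⟩⟩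
    · intro σ τ h
      apply hinj
      funext i
      exact Multiplicative.ofAdd.injective (congr_fun h i)
    · intro t
      obtain ⟨σ, hσ⟩ := hsurj (fun i => Multiplicative.toAdd (t i))
      refine ⟨σ, funext fun i => ?_⟩
      show Multiplicative.ofAdd (cc σ i) = t i
      rw [congr_fun hσ i]
      rfl
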